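/- For every positive integer t, the number p_t(n) of partitions of n whose largest part minus smallest part is at most t has generating function ∑_{n≥1} p_t(n) q^n = (1/(1−q^t)) · (1/((q;q)_t) − 1), where (q;q)_t = ∏_{k=1}^{t} (1−q^k). -/

import Mathlib

open PowerSeries

namespace BKaux


def condL (t n : ℕ) (lam : Multiset ℕ) : Prop :=
  (∀ p ∈ lam, 0 < p) ∧ lam ≠ 0 ∧ lam.sum = n ∧ lam.sup - sInf {p | p ∈ lam} ≤ t

lemma sup_mem_of_ne_zero {s : Multiset ℕ} (hs : s ≠ 0) : s.sup ∈ s := by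
  induction s using Multiset.induction with
  | empty => simp at hs
  | cons a s ih =>
    rcases eq_or_ne s 0 with rfl | h
    · simp
    · rw [Multiset.sup_cons]
      rcases le_total a s.sup with h1 | h1
      · rw [sup_eq_right.2 h1]; exact Multiset.mem_cons_of_mem (ih h)
      · rw [sup_eq_left.2 h1]; exact Multiset.mem_cons_self a s

lemma mem_le_sum {s : Multiset ℕ} {a : ℕ} (h : a ∈ s) : a ≤ s.sum :=
  Multiset.single_le_sum (fun _ _ => Nat.zero_le _) _ h

lemma sum_eq_of_mem {s : Multiset ℕ} {a : ℕ} (h : a ∈ s) :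
    s.sum = a + (s.erase a).sum := by
  conv_lhs => rw [← Multiset.cons_erase h]
  rw [Multiset.sum_cons]

/-- forward map: replace one copy of the largest part by (largest - t). -/
def fmap (t : ℕ) (l : Multiset ℕ) : Multiset ℕ := (l.sup - t) ::ₘ l.erase l.sup

/-- backward map: replace one copy of the smallest part by (smallest + t). -/
noncomputable def gmap (t : ℕ) (l : Multiset ℕ) : Multiset ℕ :=
  (sInf {p | p ∈ l} + t) ::ₘ l.erase (sInf {p | p ∈ l})

section
variable {t n : ℕ}

lemma fmap_bounds {lam : Multiset ℕ} (h : condL t n lam) (hsup : t < lam.sup) :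
    ∀ q ∈ fmap t lam, lam.sup - t ≤ q ∧ q ≤ lam.sup := by
  obtain ⟨hpos, hne, hsum, hdiff⟩ := h
  have hIle : sInf {p | p ∈ lam} ≤ lam.sup := Nat.sInf_le (sup_mem_of_ne_zero hne)
  intro q hq
  rcases Multiset.mem_cons.1 hq with rfl | hq
  · exact ⟨le_rfl, by omega⟩
  · have hq' := Multiset.mem_of_mem_erase hq
    have h1 : sInf {p | p ∈ lam} ≤ q := Nat.sInf_le hq'
    exact ⟨by omega, Multiset.le_sup hq'⟩

lemma fmap_mem {lam : Multiset ℕ} (h : condL t n lam) (hsup : t < lam.sup) :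
    condL t (n - t) (fmap t lam) := by
  have hb := fmap_bounds h hsup
  obtain ⟨hpos, hne, hsum, hdiff⟩ := h
  have hMmem : lam.sup ∈ lam := sup_mem_of_ne_zero hne
  have hMn : lam.sup ≤ n := hsum ▸ mem_le_sum hMmem
  refine ⟨?_, Multiset.cons_ne_zero, ?_, ?_⟩
  · intro p hp
    rcases Multiset.mem_cons.1 hp with rfl | hp
    · omega
    · exact hpos p (Multiset.mem_of_mem_erase hp)
  · have h1 := sum_eq_of_mem hMmem
    rw [fmap, Multiset.sum_cons]
    omega
  · have h1 : (fmap t lam).sup ≤ lam.sup := Multiset.sup_le.2 fun q hq => (hb q hq).2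
    have h2 : sInf {p | p ∈ fmap t lam} ∈ fmap t lam :=
      Nat.sInf_mem (⟨lam.sup - t, Multiset.mem_cons_self _ _⟩ : Set.Nonempty {p | p ∈ fmap t lam})
    have h3 := (hb _ h2).1
    omega

lemma gmap_fmap {lam : Multiset ℕ} (h : condL t n lam) (hsup : t < lam.sup) :
    gmap t (fmap t lam) = lam := by
  have hb := fmap_bounds h hsup
  have hne := h.2.1
  have hMmem : lam.sup ∈ lam := sup_mem_of_ne_zero hne
  have hI : sInf {p | p ∈ fmap t lam} = lam.sup - t := by
    have h2 : sInf {p | p ∈ fmap t lam} ∈ fmap t lam :=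
      Nat.sInf_mem (⟨lam.sup - t, Multiset.mem_cons_self _ _⟩ : Set.Nonempty {p | p ∈ fmap t lam})
    have h3 := (hb _ h2).1
    have h4 : sInf {p | p ∈ fmap t lam} ≤ lam.sup - t :=
      Nat.sInf_le (Multiset.mem_cons_self _ _)
    omega
  rw [gmap, hI, fmap, Multiset.erase_cons_head, Nat.sub_add_cancel hsup.le,
    Multiset.cons_erase hMmem]

lemma condL_facts {k : ℕ} {mu : Multiset ℕ} (h : condL t k mu) :
    sInf {p | p ∈ mu} ∈ mu ∧ 0 < sInf {p | p ∈ mu} ∧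
      mu.sup ≤ sInf {p | p ∈ mu} + t ∧ 1 ≤ k := by
  obtain ⟨hpos, hne, hsum, hdiff⟩ := h
  obtain ⟨a, ha⟩ := Multiset.exists_mem_of_ne_zero hne
  have hImem : sInf {p | p ∈ mu} ∈ mu := Nat.sInf_mem (⟨a, ha⟩ : Set.Nonempty {p | p ∈ mu})
  have hIle : sInf {p | p ∈ mu} ≤ mu.sup := Nat.sInf_le (sup_mem_of_ne_zero hne)
  have hk : 1 ≤ k := hsum ▸ le_trans (hpos _ hImem) (mem_le_sum hImem)
  exact ⟨hImem, hpos _ hImem, by omega, hk⟩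

lemma gmap_mem {k : ℕ} {mu : Multiset ℕ} (h : condL t k mu) :
    condL t (k + t) (gmap t mu) ∧ t < (gmap t mu).sup := by
  obtain ⟨hImem, hIpos, hsub, hk⟩ := condL_facts h
  obtain ⟨hpos, hne, hsum, hdiff⟩ := h
  set I := sInf {p | p ∈ mu} with hIdef
  have hbound : ∀ q ∈ gmap t mu, I ≤ q ∧ q ≤ I + t := by
    intro q hq
    rcases Multiset.mem_cons.1 hq with rfl | hq
    · omega
    · have hq' := Multiset.mem_of_mem_erase hq
      exact ⟨Nat.sInf_le hq', le_trans (Multiset.le_sup hq') hsub⟩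
  have hsupg : t < (gmap t mu).sup :=
    lt_of_lt_of_le (by omega) (Multiset.le_sup (Multiset.mem_cons_self _ _))
  refine ⟨⟨?_, Multiset.cons_ne_zero, ?_, ?_⟩, hsupg⟩
  · intro p hp
    rcases Multiset.mem_cons.1 hp with rfl | hp
    · omega
    · exact hpos p (Multiset.mem_of_mem_erase hp)
  · have h1 := sum_eq_of_mem hImem
    rw [gmap, Multiset.sum_cons, ← hIdef]
    omega
  · have h1 : (gmap t mu).sup ≤ I + t := Multiset.sup_le.2 fun q hq => (hbound q hq).2
    have h2 : sInf {p | p ∈ gmap t mu} ∈ gmap t mu :=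
      Nat.sInf_mem (⟨I + t, Multiset.mem_cons_self _ _⟩ : Set.Nonempty {p | p ∈ gmap t mu})
    have h3 := (hbound _ h2).1
    omega

lemma fmap_gmap {k : ℕ} {mu : Multiset ℕ} (h : condL t k mu) :
    fmap t (gmap t mu) = mu := by
  obtain ⟨hImem, hIpos, hsub, hk⟩ := condL_facts h
  set I := sInf {p | p ∈ mu} with hIdef
  have hS : (gmap t mu).sup = I + t := by
    refine le_antisymm (Multiset.sup_le.2 ?_) (Multiset.le_sup (Multiset.mem_cons_self _ _))
    intro q hq
    rcases Multiset.mem_cons.1 hq with rfl | hq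
    · exact le_rfl
    · exact le_trans (Multiset.le_sup (Multiset.mem_of_mem_erase hq)) hsub
  rw [fmap, hS, gmap, Multiset.erase_cons_head, Nat.add_sub_cancel,
    Multiset.cons_erase hImem]

end

def condC (t n : ℕ) (lam : Multiset ℕ) : Prop :=
  (∀ p ∈ lam, 0 < p) ∧ lam.sum = n ∧ lam.sup ≤ t
def condB (t n : ℕ) (lam : Multiset ℕ) : Prop :=
  (∀ p ∈ lam, 0 < p) ∧ lam ≠ 0 ∧ lam.sum = n ∧ lam.sup ≤ t
lemma finite_part {n : ℕ} {P : Multiset ℕ → Prop}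
    (h : ∀ lam, P lam → (∀ p ∈ lam, 0 < p) ∧ lam.sum = n) :
    Finite {lam : Multiset ℕ // P lam} :=
  Finite.of_injective
    (fun x => (⟨x.1, fun hi => (h x.1 x.2).1 _ hi, (h x.1 x.2).2⟩ : Nat.Partition n))
    (fun a b hab => Subtype.ext (congrArg Nat.Partition.parts hab))
section CountC
variable (u n : ℕ)

lemma condC_empty (t : ℕ) : condC t 0 (0 : Multiset ℕ) := by
  refine ⟨by simp, by simp, by simp⟩

lemma card_condC_zero_left (t : ℕ) : Nat.card {lam // condC t 0 lam} = 1 := by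
  haveI : Unique {lam // condC t 0 lam} := by
    refine ⟨⟨⟨0, condC_empty t⟩⟩, ?_⟩
    rintro ⟨lam, hpos, hsum, -⟩
    ext : 1
    by_contra hne
    obtain ⟨a, ha⟩ := Multiset.exists_mem_of_ne_zero (by simpa using hne)
    have := hpos a ha
    have := mem_le_sum ha
    omega
  exact Nat.card_unique

lemma card_condC_zero (hn : n ≠ 0) : Nat.card {lam // condC 0 n lam} = 0 := by
  haveI : IsEmpty {lam // condC 0 n lam} := by
    refine ⟨?_⟩
    rintro ⟨lam, hpos, hsum, hsup⟩
    rcases eq_or_ne lam 0 with rfl | hne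
    · simp at hsum; omega
    · obtain ⟨a, ha⟩ := Multiset.exists_mem_of_ne_zero hne
      have := hpos a ha
      have := le_trans (Multiset.le_sup ha) hsup
      omega
  exact Nat.card_of_isEmpty

lemma card_condC_lt (h : n < u + 1) :
    Nat.card {lam // condC (u + 1) n lam} = Nat.card {lam // condC u n lam} := by
  refine Nat.card_congr (Equiv.subtypeEquivRight fun lam => ?_)
  constructor
  · rintro ⟨hpos, hsum, hsup⟩
    refine ⟨hpos, hsum, Multiset.sup_le.2 fun p hp => ?_⟩
    have := mem_le_sum hp
    omega
  · rintro ⟨hpos, hsum, hsup⟩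
    exact ⟨hpos, hsum, le_trans hsup (Nat.le_succ u)⟩

lemma card_condC_succ (h : u + 1 ≤ n) :
    Nat.card {lam // condC (u + 1) n lam} =
      Nat.card {lam // condC u n lam} +
        Nat.card {lam // condC (u + 1) (n - (u + 1)) lam} := by
  classical
  haveI : Finite {lam // condC (u+1) n lam} := finite_part fun l hl => ⟨hl.1, hl.2.1⟩
  haveI : Finite {lam // condC u n lam} := finite_part fun l hl => ⟨hl.1, hl.2.1⟩
  haveI : Finite {lam // condC (u+1) (n - (u+1)) lam} :=
    finite_part fun l hl => ⟨hl.1, hl.2.1⟩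
  have e1 : {lam // condC (u+1) n lam} ≃
      {x : {lam // condC (u+1) n lam} // (u+1) ∈ x.1} ⊕
      {x : {lam // condC (u+1) n lam} // ¬ (u+1) ∈ x.1} :=
    (Equiv.sumCompl _).symm
  have e2 : {x : {lam // condC (u+1) n lam} // (u+1) ∈ x.1} ≃
      {lam // condC (u + 1) (n - (u + 1)) lam} := by
    refine ⟨fun x => ⟨x.1.1.erase (u+1), ?_, ?_, ?_⟩,
      fun y => ⟨⟨(u+1) ::ₘ y.1, ?_, ?_, ?_⟩, Multiset.mem_cons_self _ _⟩, ?_, ?_⟩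
    · exact fun p hp => x.1.2.1 p (Multiset.mem_of_mem_erase hp)
    · have h1 := sum_eq_of_mem x.2
      have h2 := x.1.2.2.1
      omega
    · exact Multiset.sup_le.2 fun p hp =>
        le_trans (Multiset.le_sup (Multiset.mem_of_mem_erase hp)) x.1.2.2.2
    · intro p hp
      rcases Multiset.mem_cons.1 hp with rfl | hp
      · omega
      · exact y.2.1 p hp
    · rw [Multiset.sum_cons]
      have := y.2.2.1
      omega
    · refine Multiset.sup_le.2 fun p hp => ?_
      rcases Multiset.mem_cons.1 hp with rfl | hp
      · exact le_rfl
      · exact le_trans (Multiset.le_sup hp) y.2.2.2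
    · rintro ⟨⟨lam, hc⟩, hmem⟩
      exact Subtype.ext (Subtype.ext (Multiset.cons_erase hmem))
    · rintro ⟨lam, hc⟩
      exact Subtype.ext (Multiset.erase_cons_head _ _)
  have e3 : {x : {lam // condC (u+1) n lam} // ¬ (u+1) ∈ x.1} ≃
      {lam // condC u n lam} := by
    refine (Equiv.subtypeSubtypeEquivSubtypeInter (condC (u+1) n) (fun l => (u+1) ∉ l)).trans
      (Equiv.subtypeEquivRight fun lam => ?_)
    constructor
    · rintro ⟨⟨hpos, hsum, hsup⟩, hmem⟩
      refine ⟨hpos, hsum, Multiset.sup_le.2 fun p hp => ?_⟩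
      have h1 := le_trans (Multiset.le_sup hp) hsup
      rcases eq_or_ne p (u+1) with rfl | hne
      · exact absurd hp hmem
      · omega
    · rintro ⟨hpos, hsum, hsup⟩
      refine ⟨⟨hpos, hsum, le_trans hsup (Nat.le_succ u)⟩, fun hmem => ?_⟩
      have := le_trans (Multiset.le_sup hmem) hsup
      omega
  rw [Nat.card_congr (e1.trans (Equiv.sumCongr e2 e3)), Nat.card_sum, Nat.add_comm]

end CountC

section Main
variable (t : ℕ)

lemma card_condL_zero : Nat.card {lam // condL t 0 lam} = 0 := by
  haveI : IsEmpty {lam // condL t 0 lam} := ⟨fun x => by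
    have := (condL_facts x.2).2.2.2; omega⟩
  exact Nat.card_of_isEmpty

lemma card_condB_eq_condC {n : ℕ} (hn : n ≠ 0) :
    Nat.card {lam // condB t n lam} = Nat.card {lam // condC t n lam} := by
  refine Nat.card_congr (Equiv.subtypeEquivRight fun lam => ?_)
  constructor
  · rintro ⟨hpos, hne, hsum, hsup⟩; exact ⟨hpos, hsum, hsup⟩
  · rintro ⟨hpos, hsum, hsup⟩
    refine ⟨hpos, fun h0 => hn ?_, hsum, hsup⟩
    rw [h0] at hsum; simpa using hsum.symm

lemma card_rec (n : ℕ) :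
    Nat.card {lam // condL t n lam} =
      Nat.card {lam // condB t n lam} + Nat.card {lam // condL t (n - t) lam} := by
  classical
  haveI : Finite {lam // condL t n lam} := finite_part fun l hl => ⟨hl.1, hl.2.2.1⟩
  haveI : Finite {lam // condB t n lam} := finite_part fun l hl => ⟨hl.1, hl.2.2.1⟩
  haveI : Finite {lam // condL t (n - t) lam} := finite_part fun l hl => ⟨hl.1, hl.2.2.1⟩
  have e1 : {lam // condL t n lam} ≃
      {x : {lam // condL t n lam} // x.1.sup ≤ t} ⊕
      {x : {lam // condL t n lam} // ¬ x.1.sup ≤ t} := (Equiv.sumCompl _).symm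
  have e2 : {x : {lam // condL t n lam} // x.1.sup ≤ t} ≃ {lam // condB t n lam} :=
    (Equiv.subtypeSubtypeEquivSubtypeInter (condL t n) (fun l => l.sup ≤ t)).trans
      (Equiv.subtypeEquivRight fun lam =>
        ⟨fun h => ⟨h.1.1, h.1.2.1, h.1.2.2.1, h.2⟩,
         fun h => ⟨⟨h.1, h.2.1, h.2.2.1, le_trans (Nat.sub_le _ _) h.2.2.2⟩, h.2.2.2⟩⟩)
  have e3 : {x : {lam // condL t n lam} // ¬ x.1.sup ≤ t} ≃
      {lam // condL t (n - t) lam} := by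
    refine (Equiv.subtypeSubtypeEquivSubtypeInter (condL t n) (fun l => ¬ l.sup ≤ t)).trans ?_
    refine ⟨fun x => ⟨fmap t x.1, fmap_mem x.2.1 (not_le.1 x.2.2)⟩,
      fun y => ⟨gmap t y.1, ?_⟩, ?_, ?_⟩
    · obtain ⟨hmem, hsup⟩ := gmap_mem y.2
      have hk := (condL_facts y.2).2.2.2
      have heq : n - t + t = n := by omega
      rw [heq] at hmem
      exact ⟨hmem, not_le.2 hsup⟩
    · intro x
      exact Subtype.ext (gmap_fmap x.2.1 (not_le.1 x.2.2))
    · intro y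
      exact Subtype.ext (fmap_gmap y.2)
  rw [Nat.card_congr (e1.trans (Equiv.sumCongr e2 e3)), Nat.card_sum]

lemma step (u : ℕ) :
    (PowerSeries.mk fun n => (Nat.card {lam // condC (u+1) n lam} : ℚ)) * (1 - X ^ (u+1)) =
      PowerSeries.mk fun n => (Nat.card {lam // condC u n lam} : ℚ) := by
  ext n
  simp only [mul_sub, mul_one, map_sub, PowerSeries.coeff_mul_X_pow', coeff_mk]
  split_ifs with h
  · have h2 : (Nat.card {lam // condC (u+1) n lam} : ℚ)
        = (Nat.card {lam // condC u n lam} : ℚ)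
          + (Nat.card {lam // condC (u+1) (n-(u+1)) lam} : ℚ) := by
      have h1 := card_condC_succ u n h
      exact_mod_cast congrArg (fun m : ℕ => (m : ℚ)) h1
    linarith
  · rw [card_condC_lt u n (not_le.1 h), sub_zero]

lemma key (u : ℕ) :
    (PowerSeries.mk fun n => (Nat.card {lam // condC u n lam} : ℚ)) *
      ∏ k ∈ Finset.range u, (1 - X ^ (k+1)) = 1 := by
  induction u with
  | zero =>
    rw [Finset.range_zero, Finset.prod_empty, mul_one]
    ext n
    rw [coeff_mk, PowerSeries.coeff_one]
    rcases eq_or_ne n 0 with rfl | hn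
    · simp [card_condC_zero_left]
    · simp [card_condC_zero n hn, hn]
  | succ u ih =>
    rw [Finset.prod_range_succ,
      show ∀ a b c : PowerSeries ℚ, a * (b * c) = a * c * b from fun a b c => by ring,
      step u, ih]

end Main
end BKaux

theorem breuer_kronholm_gen_fun (t : ℕ) (ht : 0 < t) :
    (PowerSeries.mk fun n =>
        (Nat.card {lam : Multiset ℕ // (∀ p ∈ lam, 0 < p) ∧ lam ≠ 0 ∧
          lam.sum = n ∧ lam.sup - sInf {p | p ∈ lam} ≤ t} : ℚ)) =
      (1 - PowerSeries.X ^ t)⁻¹ *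
        ((∏ k ∈ Finset.range t, (1 - PowerSeries.X ^ (k + 1) : PowerSeries ℚ))⁻¹ - 1) := by
  classical
  show (PowerSeries.mk fun n => (Nat.card {lam // BKaux.condL t n lam} : ℚ)) = _
  have hP : (PowerSeries.constantCoeff : PowerSeries ℚ →+* ℚ)
      (∏ k ∈ Finset.range t, (1 - X ^ (k+1) : PowerSeries ℚ)) = 1 := by
    rw [map_prod]
    refine Finset.prod_eq_one fun k _ => ?_
    simp
  have hXt : (PowerSeries.constantCoeff : PowerSeries ℚ →+* ℚ) (1 - X ^ t) = 1 := by
    simp [zero_pow ht.ne']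
  have hinv : (∏ k ∈ Finset.range t, (1 - X ^ (k+1) : PowerSeries ℚ))⁻¹ =
      PowerSeries.mk fun n => (Nat.card {lam // BKaux.condC t n lam} : ℚ) :=
    (PowerSeries.inv_eq_iff_mul_eq_one (by rw [hP]; exact one_ne_zero)).2 (BKaux.key t)
  have hrec : (1 - X ^ t) *
      (PowerSeries.mk fun n => (Nat.card {lam // BKaux.condL t n lam} : ℚ)) =
      (PowerSeries.mk fun n => (Nat.card {lam // BKaux.condC t n lam} : ℚ)) - 1 := by
    ext n
    simp only [sub_mul, one_mul, map_sub, PowerSeries.coeff_X_pow_mul', coeff_mk,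
      PowerSeries.coeff_one]
    rcases eq_or_ne n 0 with rfl | hn
    · rw [if_neg (by omega), if_pos rfl, BKaux.card_condL_zero t, BKaux.card_condC_zero_left t]
      norm_num
    · rw [if_neg hn, ← BKaux.card_condB_eq_condC t hn]
      have h1 := BKaux.card_rec t n
      split_ifs with h
      · have h2 : (Nat.card {lam // BKaux.condL t n lam} : ℚ)
            = (Nat.card {lam // BKaux.condB t n lam} : ℚ)
              + (Nat.card {lam // BKaux.condL t (n - t) lam} : ℚ) := by
          exact_mod_cast congrArg (fun m : ℕ => (m : ℚ)) h1
        linarith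
      · have h0 : n - t = 0 := by omega
        rw [h0, BKaux.card_condL_zero t] at h1
        rw [h1]
        norm_num
  have hunit : ((1 - X ^ t : PowerSeries ℚ))⁻¹ * (1 - X ^ t) = 1 :=
    PowerSeries.inv_mul_cancel _ (by rw [hXt]; exact one_ne_zero)
  calc (PowerSeries.mk fun n => (Nat.card {lam // BKaux.condL t n lam} : ℚ))
      = ((1 - X ^ t : PowerSeries ℚ)⁻¹ * (1 - X ^ t)) *
        (PowerSeries.mk fun n => (Nat.card {lam // BKaux.condL t n lam} : ℚ)) := by
        rw [hunit, one_mul]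
    _ = (1 - X ^ t : PowerSeries ℚ)⁻¹ *
        ((PowerSeries.mk fun n => (Nat.card {lam // BKaux.condC t n lam} : ℚ)) - 1) := by
        rw [mul_assoc, hrec]
    _ = _ := by rw [hinv]
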